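/- Let m ≥ 2 be an integer and let θ, μ, λ be real numbers satisfying: λ ≥ 0, θ + λ ≥ 0, μ + λ ≥ 0, λ + ((m−1)/√m)·μ ≥ 0, and (θ + λ) + ((m−1)/√m)·(μ + λ) ≥ 1. Then max{ m·λ, (θ + λ) + (m−1)·(μ + λ), ((m−1)·θ + (m−1)²·μ)/√m + m·λ } ≥ (m−1)/(6√m). -/

import Mathlib

/-- The arithmetic case analysis behind the lower bound on the value of a
symmetric affine policy for the worst-case instance. -/
theorem symmetric_affine_case_analysis (m : ℕ) (hm : 2 ≤ m) (θ μ lam : ℝ)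
    (h0 : 0 ≤ lam) (h1 : 0 ≤ θ + lam) (h2 : 0 ≤ μ + lam)
    (h3 : 0 ≤ lam + (((m : ℝ) - 1) / Real.sqrt m) * μ)
    (h4 : 1 ≤ (θ + lam) + (((m : ℝ) - 1) / Real.sqrt m) * (μ + lam)) :
    ((m : ℝ) - 1) / (6 * Real.sqrt m) ≤
      max ((m : ℝ) * lam)
        (max ((θ + lam) + ((m : ℝ) - 1) * (μ + lam))
          ((((m : ℝ) - 1) * θ + ((m : ℝ) - 1) ^ 2 * μ) / Real.sqrt m + (m : ℝ) * lam)) := by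
  have hm1 : (2:ℝ) ≤ (m:ℝ) := by exact_mod_cast hm
  set s := Real.sqrt m with hsdef
  have hs_pos : 0 < s := Real.sqrt_pos.mpr (by linarith)
  have hs2 : s * s = (m:ℝ) := Real.mul_self_sqrt (by linarith)
  have hs1 : 1 ≤ s := by nlinarith
  have hsm : s ≤ (m:ℝ) := by nlinarith
  have hm0 : (0:ℝ) ≤ (m:ℝ) := by linarith
  set e : ℝ := ((m:ℝ) - 1) / s with hedef
  have he : e * s = (m:ℝ) - 1 := div_mul_cancel₀ _ hs_pos.ne'
  set D : ℝ := (((m:ℝ) - 1) * θ + ((m:ℝ) - 1) ^ 2 * μ) / s with hDdef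
  have hD : D * s = ((m:ℝ) - 1) * θ + ((m:ℝ) - 1) ^ 2 * μ :=
    div_mul_cancel₀ _ hs_pos.ne'
  refine le_trans ?_ (le_max_right _ _)
  set B : ℝ := (θ + lam) + ((m:ℝ) - 1) * (μ + lam) with hBdef
  set C : ℝ := D + (m:ℝ) * lam with hCdef
  have hB : B ≤ max B C := le_max_left _ _
  have hC : C ≤ max B C := le_max_right _ _
  set M : ℝ := max B C with hMdef
  clear_value s e D B C M
  -- h3 multiplied by s
  have h3' : 0 ≤ s * lam + ((m:ℝ) - 1) * μ := by
    have h := mul_nonneg hs_pos.le h3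
    nlinarith [he]
  -- h4 multiplied by s
  have h4' : s ≤ s * (θ + lam) + ((m:ℝ) - 1) * (μ + lam) := by
    have h := mul_le_mul_of_nonneg_left h4 hs_pos.le
    nlinarith [he]
  -- key1 : m*(θ+lam) ≤ s*M + M
  have key1 : (m:ℝ) * (θ + lam) ≤ s * M + M := by
    nlinarith [mul_le_mul_of_nonneg_left hC hs_pos.le, hD,
      mul_nonneg hm0 h3', hB]
  have hyM : ((m:ℝ) - 1) * (μ + lam) ≤ M := by
    have : B ≤ M := hB
    rw [hBdef] at this
    linarith
  -- key2 : m*s ≤ (2m+s)*M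
  have key2 : (m:ℝ) * s ≤ (2 * (m:ℝ) + s) * M := by
    have hssM : s * (s * M) = (m:ℝ) * M := by rw [← mul_assoc, hs2]
    have ha := mul_le_mul_of_nonneg_left h4' hm0
    have hb := mul_le_mul_of_nonneg_left key1 hs_pos.le
    have hc := mul_le_mul_of_nonneg_left hyM hm0
    linarith [ha, hb, hc, hssM]
  have h2ms : (0:ℝ) < 2 * (m:ℝ) + s := by linarith
  have hms_pos : 0 < (m:ℝ) * s := mul_pos (by linarith) hs_pos
  have hMpos : 0 < M := by
    by_contra hcon
    push_neg at hcon
    have hnp := mul_nonpos_of_nonneg_of_nonpos h2ms.le hcon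
    linarith
  rw [div_le_iff₀ (by positivity)]
  have hs2m : (m:ℝ) * (s * s) = (m:ℝ) * (m:ℝ) := by rw [hs2]
  have hA : 6 * (m:ℝ) * (m:ℝ) ≤ (6 * s * M) * (2 * (m:ℝ) + s) := by
    have h := mul_le_mul_of_nonneg_left key2 (by linarith : (0:ℝ) ≤ 6 * s)
    linarith [hs2m, h]
  have hBnd : ((m:ℝ) - 1) * (2 * (m:ℝ) + s) ≤ 6 * (m:ℝ) * (m:ℝ) := by
    have h := mul_le_mul_of_nonneg_left hsm hm0
    linarith [h, mul_nonneg hm0 hm0, hs_pos.le]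
  have hfin : ((m:ℝ) - 1) * (2 * (m:ℝ) + s) ≤ (6 * s * M) * (2 * (m:ℝ) + s) :=
    le_trans hBnd hA
  have := (mul_le_mul_iff_of_pos_right h2ms).mp hfin
  linarith
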